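/- The abelianization of the group TVPₙ (presented with generators λ_{ij} for 1 ≤ i ≠ j ≤ n and γ₁,…,γₙ, with relations including λ_{ij} = γᵢγⱼλ_{ji}γⱼγᵢ, γᵢ² = e, commutation of the γ's with each other and with the λ's, and the mixed braid-type relations) is isomorphic to Z^{n(n-1)/2} ⊕ (Z/2Z)ⁿ. -/

import Mathlib

/-- Generators of TVPₙ: `Sum.inl ⟨(i,j), h⟩` is λ_{ij} (i ≠ j), `Sum.inr j` is γⱼ. -/
abbrev TVPGen (n : ℕ) := {p : Fin n × Fin n // p.1 ≠ p.2} ⊕ Fin n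

def lamP {n : ℕ} (i j : Fin n) (h : i ≠ j) : FreeGroup (TVPGen n) :=
  FreeGroup.of (Sum.inl ⟨(i, j), h⟩)

def gamP {n : ℕ} (i : Fin n) : FreeGroup (TVPGen n) :=
  FreeGroup.of (Sum.inr i)

/-- Defining relations of the twisted virtual pure braid group TVPₙ. -/
def tvpRels (n : ℕ) : Set (FreeGroup (TVPGen n)) :=
  {r |
    (∃ (i j k l : Fin n) (hij : i ≠ j) (hkl : k ≠ l), i ≠ k ∧ i ≠ l ∧ j ≠ k ∧ j ≠ l ∧
      r = lamP i j hij * lamP k l hkl * (lamP k l hkl * lamP i j hij)⁻¹) ∨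
    (∃ (i j k : Fin n) (hki : k ≠ i) (hkj : k ≠ j) (hij : i ≠ j),
      r = lamP k i hki * lamP k j hkj * lamP i j hij *
        (lamP i j hij * lamP k j hkj * lamP k i hki)⁻¹) ∨
    (∃ i, r = gamP i ^ 2) ∨
    (∃ i j, i ≠ j ∧ r = gamP i * gamP j * (gamP j * gamP i)⁻¹) ∨
    (∃ (i j k : Fin n) (hij : i ≠ j), i ≠ k ∧ j ≠ k ∧
      r = lamP i j hij * gamP k * (gamP k * lamP i j hij)⁻¹) ∨
    (∃ (i j : Fin n) (hij : i ≠ j),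
      r = lamP i j hij *
        (gamP i * gamP j * lamP j i hij.symm * gamP j * gamP i)⁻¹)}

namespace TVPAux

variable {n : ℕ}

abbrev PairT (n : ℕ) := {s : Finset (Fin n) // s.card = 2}

abbrev Hgrp (n : ℕ) := (PairT n → Multiplicative ℤ) × (Fin n → Multiplicative (ZMod 2))

abbrev Ab (n : ℕ) := Abelianization (PresentedGroup (tvpRels n))

def ab (n : ℕ) : FreeGroup (TVPGen n) →* Ab n :=
  (Abelianization.of (G := PresentedGroup (tvpRels n))).comp (PresentedGroup.mk (tvpRels n))

lemma ab_rel {r : FreeGroup (TVPGen n)} (hr : r ∈ tvpRels n) : ab n r = 1 := by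
  have : PresentedGroup.mk (tvpRels n) r = 1 :=
    (QuotientGroup.eq_one_iff r).mpr (Subgroup.subset_normalClosure hr)
  simp [ab, this]

lemma gam_sq (i : Fin n) : ab n (gamP i) * ab n (gamP i) = 1 := by
  have := ab_rel (n := n) (r := gamP i ^ 2) (Or.inr (Or.inr (Or.inl ⟨i, rfl⟩)))
  simpa [pow_two] using this

lemma lam_swap (i j : Fin n) (h : i ≠ j) :
    ab n (lamP i j h) = ab n (lamP j i h.symm) := by
  have h1 := ab_rel (n := n)
    (Or.inr (Or.inr (Or.inr (Or.inr (Or.inr ⟨i, j, h, rfl⟩)))))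
  rw [map_mul, map_inv, mul_inv_eq_one] at h1
  rw [h1]
  simp only [map_mul]
  have hac : ab n (gamP i) * ab n (gamP j) * ab n (lamP j i h.symm) * ab n (gamP j)
      * ab n (gamP i)
      = ab n (lamP j i h.symm) * (ab n (gamP i) * ab n (gamP i))
        * (ab n (gamP j) * ab n (gamP j)) := by
    simp [mul_comm, mul_left_comm, mul_assoc]
  rw [hac, gam_sq, gam_sq, mul_one, mul_one]

end TVPAux

namespace TVPAux
variable {n : ℕ}

lemma pair_cases {i j k l : Fin n} (hij : i ≠ j) (h : ({k, l} : Finset (Fin n)) = {i, j}) :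
    (k = i ∧ l = j) ∨ (k = j ∧ l = i) := by
  have hk : k ∈ ({i, j} : Finset (Fin n)) := by rw [← h]; simp
  have hi : i ∈ ({k, l} : Finset (Fin n)) := by rw [h]; simp
  have hj : j ∈ ({k, l} : Finset (Fin n)) := by rw [h]; simp
  simp only [Finset.mem_insert, Finset.mem_singleton] at hk hi hj
  rcases hk with hk | hk
  · subst hk
    rcases hj with hj | hj
    · exact absurd hj.symm hij
    · exact Or.inl ⟨rfl, hj.symm⟩
  · subst hk
    rcases hi with hi | hi
    · exact absurd hi hij
    · exact Or.inr ⟨rfl, hi.symm⟩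

lemma lam_pair_eq {i j k l : Fin n} (hij : i ≠ j) (hkl : k ≠ l)
    (h : ({k, l} : Finset (Fin n)) = {i, j}) :
    ab n (lamP k l hkl) = ab n (lamP i j hij) := by
  rcases pair_cases hij h with ⟨h1, h2⟩ | ⟨h1, h2⟩
  · subst h1; subst h2; rfl
  · subst h1; subst h2; exact (lam_swap _ _ _).symm

lemma pe_spec (s : PairT n) :
    ∃ p : Fin n × Fin n, p.1 ≠ p.2 ∧ ({p.1, p.2} : Finset (Fin n)) = s.val := by
  obtain ⟨a, b, hab, h⟩ := Finset.card_eq_two.mp s.2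
  exact ⟨(a, b), hab, h.symm⟩

noncomputable def pe (s : PairT n) : Fin n × Fin n := (pe_spec s).choose

lemma pe_ne (s : PairT n) : (pe s).1 ≠ (pe s).2 := (pe_spec s).choose_spec.1

lemma pe_eq (s : PairT n) : ({(pe s).1, (pe s).2} : Finset (Fin n)) = s.val :=
  (pe_spec s).choose_spec.2

noncomputable def L (s : PairT n) : Ab n := ab n (lamP (pe s).1 (pe s).2 (pe_ne s))

noncomputable def Γ (i : Fin n) : Ab n := ab n (gamP i)

lemma L_eq (i j : Fin n) (h : i ≠ j) :
    L ⟨{i, j}, Finset.card_pair h⟩ = ab n (lamP i j h) := by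
  apply lam_pair_eq h (pe_ne _)
  exact pe_eq ⟨{i, j}, Finset.card_pair h⟩

/-- generator images of the forward map -/
def fGen (n : ℕ) : TVPGen n → Hgrp n
  | .inl p => (Pi.mulSingle (M := fun _ : PairT n => Multiplicative ℤ)
      ⟨{p.1.1, p.1.2}, Finset.card_pair p.2⟩ (Multiplicative.ofAdd 1), 1)
  | .inr i => (1, Pi.mulSingle i (Multiplicative.ofAdd 1))

lemma fGen_lam (i j : Fin n) (h : i ≠ j) :
    FreeGroup.lift (fGen n) (lamP i j h)
      = (Pi.mulSingle (M := fun _ : PairT n => Multiplicative ℤ)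
          ⟨{i, j}, Finset.card_pair h⟩ (Multiplicative.ofAdd 1), 1) := by
  simp [lamP, fGen]

lemma fGen_gam (i : Fin n) :
    FreeGroup.lift (fGen n) (gamP i) = (1, Pi.mulSingle i (Multiplicative.ofAdd 1)) := by
  simp [gamP, fGen]

lemma hF : ∀ r ∈ tvpRels n, FreeGroup.lift (fGen n) r = 1 := by
  intro r hr
  rcases hr with ⟨i, j, k, l, hij, hkl, _, _, _, _, rfl⟩ |
    ⟨i, j, k, hki, hkj, hij, rfl⟩ | ⟨i, rfl⟩ | ⟨i, j, _, rfl⟩ |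
    ⟨i, j, k, hij, _, _, rfl⟩ | ⟨i, j, hij, rfl⟩
  · simp only [map_mul, map_inv]
    rw [mul_inv_eq_one, mul_comm]
  · simp only [map_mul, map_inv]
    rw [mul_inv_eq_one]
    generalize (FreeGroup.lift (fGen n)) (lamP k i hki) = A
    generalize (FreeGroup.lift (fGen n)) (lamP k j hkj) = B
    generalize (FreeGroup.lift (fGen n)) (lamP i j hij) = C
    rw [mul_comm (A * B) C, mul_comm A B, ← mul_assoc]
  · rw [map_pow, fGen_gam]
    ext x
    · simp
    · by_cases hx : x = i <;> simp [pow_two, hx, ← ofAdd_add]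
      decide
  · simp only [map_mul, map_inv]
    rw [mul_inv_eq_one, mul_comm]
  · simp only [map_mul, map_inv]
    rw [mul_inv_eq_one, mul_comm]
  · simp only [map_mul, map_inv]
    rw [mul_inv_eq_one]
    rw [fGen_lam i j hij, fGen_lam j i hij.symm, fGen_gam, fGen_gam]
    have hpair : (⟨{j, i}, Finset.card_pair hij.symm⟩ : PairT n)
        = ⟨{i, j}, Finset.card_pair hij⟩ := Subtype.ext (Finset.pair_comm j i)
    rw [hpair]
    have hg : ∀ k : Fin n,
        (Pi.mulSingle k (Multiplicative.ofAdd (1 : ZMod 2)) : Fin n → Multiplicative (ZMod 2))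
          * Pi.mulSingle k (Multiplicative.ofAdd 1) = 1 := by
      intro k
      rw [← Pi.mulSingle_mul, ← ofAdd_add]
      have h2 : (1 + 1 : ZMod 2) = 0 := by decide
      rw [h2, ofAdd_zero, Pi.mulSingle_one]
    symm
    simp only [Prod.mk_mul_mk, one_mul, mul_one]
    congr 1
    rw [mul_assoc (Pi.mulSingle i (Multiplicative.ofAdd 1) : Fin n → Multiplicative (ZMod 2)),
      hg j, mul_one, hg i]

end TVPAux

namespace TVPAux
variable {n : ℕ}

noncomputable def fhom (n : ℕ) : Ab n →* Hgrp n :=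
  Abelianization.lift (PresentedGroup.toGroup (hF (n := n)))

lemma fhom_ab (w : FreeGroup (TVPGen n)) : fhom n (ab n w) = FreeGroup.lift (fGen n) w := rfl

lemma pow_val_add (g : Ab n) (hg : g * g = 1) (x y : ZMod 2) :
    g ^ (x + y).val = g ^ x.val * g ^ y.val := by
  have hg2 : g ^ 2 = 1 := by rw [pow_two]; exact hg
  have key : ∀ m : ℕ, g ^ (m % 2) = g ^ m := by
    intro m
    conv_rhs => rw [← Nat.div_add_mod m 2]
    rw [pow_add, pow_mul, hg2, one_pow, one_mul]
  rw [ZMod.val_add, key, pow_add]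

noncomputable def bz (n : ℕ) : (PairT n → Multiplicative ℤ) →* Ab n :=
  MonoidHom.mk' (fun a => ∏ s : PairT n, L s ^ (Multiplicative.toAdd (a s)))
    (by
      intro a b
      rw [← Finset.prod_mul_distrib]
      refine Finset.prod_congr rfl fun s _ => ?_
      rw [Pi.mul_apply, toAdd_mul, zpow_add])

noncomputable def bg (n : ℕ) : (Fin n → Multiplicative (ZMod 2)) →* Ab n :=
  MonoidHom.mk' (fun c => ∏ i : Fin n, Γ i ^ (Multiplicative.toAdd (c i)).val)
    (by
      intro c d
      rw [← Finset.prod_mul_distrib]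
      refine Finset.prod_congr rfl fun i _ => ?_
      rw [Pi.mul_apply, toAdd_mul]
      exact pow_val_add (Γ i) (gam_sq i) _ _)

noncomputable def bhom (n : ℕ) : Hgrp n →* Ab n := (bz n).coprod (bg n)

lemma bz_apply (a : PairT n → Multiplicative ℤ) :
    bz n a = ∏ s : PairT n, L s ^ (Multiplicative.toAdd (a s)) := rfl

lemma bg_apply (c : Fin n → Multiplicative (ZMod 2)) :
    bg n c = ∏ i : Fin n, Γ i ^ (Multiplicative.toAdd (c i)).val := rfl

lemma bhom_apply (a : PairT n → Multiplicative ℤ) (c : Fin n → Multiplicative (ZMod 2)) :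
    bhom n (a, c) = bz n a * bg n c := rfl

lemma bf : (bhom n).comp (fhom n) = MonoidHom.id (Ab n) := by
  apply Abelianization.hom_ext
  apply PresentedGroup.ext
  rintro (⟨⟨i, j⟩, h⟩ | i)
  · show bhom n (fhom n (ab n (lamP i j h))) = ab n (lamP i j h)
    rw [fhom_ab, fGen_lam, bhom_apply, map_one (bg n), mul_one, bz_apply,
      Finset.prod_eq_single (⟨{i, j}, Finset.card_pair h⟩ : PairT n)]
    · rw [Pi.mulSingle_eq_same, toAdd_ofAdd, zpow_one, L_eq]
    · intro t _ ht
      rw [Pi.mulSingle_eq_of_ne ht, toAdd_one, zpow_zero]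
    · exact fun hmem => absurd (Finset.mem_univ _) hmem
  · show bhom n (fhom n (ab n (gamP i))) = ab n (gamP i)
    rw [fhom_ab, fGen_gam, bhom_apply, map_one (bz n), one_mul, bg_apply,
      Finset.prod_eq_single i]
    · rw [Pi.mulSingle_eq_same, toAdd_ofAdd, ZMod.val_one, pow_one]; rfl
    · intro t _ ht
      rw [Pi.mulSingle_eq_of_ne ht, toAdd_one, ZMod.val_zero, pow_zero]
    · exact fun hmem => absurd (Finset.mem_univ _) hmem

lemma fb (p : Hgrp n) : fhom n (bhom n p) = p := by
  obtain ⟨a, c⟩ := p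
  show fhom n (bz n a * bg n c) = (a, c)
  rw [map_mul]
  have h1 : fhom n (bz n a) = (a, 1) := by
    show fhom n (∏ s : PairT n, L s ^ Multiplicative.toAdd (a s)) = _
    rw [map_prod]
    have hLs : ∀ s : PairT n, fhom n (L s) ^ Multiplicative.toAdd (a s)
        = ((Pi.mulSingle s (a s) : PairT n → Multiplicative ℤ), 1) := by
      intro s
      have hL : fhom n (L s)
          = ((Pi.mulSingle s (Multiplicative.ofAdd 1) : PairT n → Multiplicative ℤ), 1) := by
        show fhom n (ab n (lamP (pe s).1 (pe s).2 (pe_ne s))) = _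
        rw [fhom_ab, fGen_lam]
        have hs : (⟨{(pe s).1, (pe s).2}, Finset.card_pair (pe_ne s)⟩ : PairT n) = s :=
          Subtype.ext (pe_eq s)
        rw [hs]
      rw [hL]
      have hz : (((Pi.mulSingle s (Multiplicative.ofAdd 1) : PairT n → Multiplicative ℤ), 1)
            : Hgrp n) ^ Multiplicative.toAdd (a s)
          = (Pi.mulSingle s (Multiplicative.ofAdd 1) ^ Multiplicative.toAdd (a s), 1) := by
        refine Prod.ext_iff.mpr ⟨rfl, ?_⟩
        show (1 : Fin n → Multiplicative (ZMod 2)) ^ Multiplicative.toAdd (a s) = 1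
        exact one_zpow _
      rw [hz, ← Pi.mulSingle_zpow]
      have hval : (Multiplicative.ofAdd (1 : ℤ)) ^ Multiplicative.toAdd (a s) = a s := by
        apply Multiplicative.toAdd.injective
        rw [toAdd_zpow, toAdd_ofAdd, smul_eq_mul, mul_one]
      rw [hval]
    simp only [map_zpow]
    rw [Finset.prod_congr rfl fun s _ => hLs s]
    refine Prod.ext_iff.mpr ⟨?_, ?_⟩
    · rw [Prod.fst_prod]
      exact Finset.univ_prod_mulSingle a
    · rw [Prod.snd_prod]
      simp
  have h2 : fhom n (bg n c) = (1, c) := by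
    show fhom n (∏ i : Fin n, Γ i ^ (Multiplicative.toAdd (c i)).val) = _
    rw [map_prod]
    have hGi : ∀ i : Fin n, fhom n (Γ i) ^ (Multiplicative.toAdd (c i)).val
        = (1, (Pi.mulSingle i (c i) : Fin n → Multiplicative (ZMod 2))) := by
      intro i
      have hG : fhom n (Γ i)
          = (1, (Pi.mulSingle i (Multiplicative.ofAdd 1) : Fin n → Multiplicative (ZMod 2))) := by
        show fhom n (ab n (gamP i)) = _
        rw [fhom_ab, fGen_gam]
      rw [hG]
      have hz : ((1, (Pi.mulSingle i (Multiplicative.ofAdd 1) :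
            Fin n → Multiplicative (ZMod 2))) : Hgrp n) ^ (Multiplicative.toAdd (c i)).val
          = (1, Pi.mulSingle i (Multiplicative.ofAdd 1) ^ (Multiplicative.toAdd (c i)).val) := by
        refine Prod.ext_iff.mpr ⟨?_, rfl⟩
        show (1 : PairT n → Multiplicative ℤ) ^ (Multiplicative.toAdd (c i)).val = 1
        exact one_pow _
      rw [hz, ← Pi.mulSingle_pow]
      have hval : (Multiplicative.ofAdd (1 : ZMod 2)) ^ (Multiplicative.toAdd (c i)).val
          = c i := by
        apply Multiplicative.toAdd.injective
        rw [toAdd_pow, toAdd_ofAdd, nsmul_eq_mul, mul_one, ZMod.natCast_val, ZMod.cast_id]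
      rw [hval]
    simp only [map_pow]
    rw [Finset.prod_congr rfl fun i _ => hGi i]
    refine Prod.ext_iff.mpr ⟨?_, ?_⟩
    · rw [Prod.fst_prod]
      simp
    · rw [Prod.snd_prod]
      exact Finset.univ_prod_mulSingle c
  rw [h1, h2, Prod.mk_mul_mk, mul_one, one_mul]

noncomputable def mainEquiv (n : ℕ) : Ab n ≃* Hgrp n where
  toFun := fhom n
  invFun := bhom n
  left_inv := fun x => by
    have := DFunLike.congr_fun (bf (n := n)) x
    simpa using this
  right_inv := fb
  map_mul' := map_mul _

lemma card_pairT : Fintype.card (PairT n) = n * (n - 1) / 2 := by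
  have h := Fintype.card_finset_len (α := Fin n) 2
  rw [Fintype.card_fin, Nat.choose_two_right] at h
  simpa using h

end TVPAux

/-- The abelianization of TVPₙ is ℤ^{n(n-1)/2} ⊕ (ℤ/2ℤ)ⁿ. -/
theorem stmt3 (n : ℕ) :
    Nonempty (Abelianization (PresentedGroup (tvpRels n)) ≃*
      (Fin (n * (n - 1) / 2) → Multiplicative ℤ) ×
        (Fin n → Multiplicative (ZMod 2))) := by
  exact ⟨(TVPAux.mainEquiv n).trans
    (MulEquiv.prodCongr
      (MulEquiv.arrowCongr (Fintype.equivFinOfCardEq TVPAux.card_pairT) (MulEquiv.refl _))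
      (MulEquiv.refl _))⟩
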